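/- arXiv:1603.05810 — 2 statements merged into one kernel-verified Lean document; each statement's English description precedes it below -/
import Mathlib

section
/- (log 2)² = 2·Li₂(−1/8) − 4·Li₂(1/4) − 4·Li₂(−1/2), where Li₂(x) = ∑_{k≥1} x^k/k². -/
noncomputable def Li (s : ℕ) (z : ℂ) : ℂ := ∑' k : ℕ, z ^ (k + 1) / ((k : ℂ) + 1) ^ s

noncomputable def LiR (s : ℕ) (x : ℝ) : ℝ := ∑' k : ℕ, x ^ (k + 1) / ((k : ℝ) + 1) ^ s

open Real Set

noncomputable def Dfun (x : ℝ) : ℝ := ∑' n : ℕ, x ^ n / ((n : ℝ) + 1)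

lemma hasDerivAt_LiR {x : ℝ} (hx : x ∈ Ioo (-(7/10) : ℝ) (7/10)) :
    HasDerivAt (LiR 2) (Dfun x) x := by
  have hu : Summable (fun n : ℕ => (7/10 : ℝ) ^ n) :=
    summable_geometric_of_lt_one (by norm_num) (by norm_num)
  have hg : ∀ (n : ℕ) (y : ℝ), y ∈ Ioo (-(7/10) : ℝ) (7/10) →
      HasDerivAt (fun z : ℝ => z ^ (n + 1) / ((n : ℝ) + 1) ^ 2) (y ^ n / ((n : ℝ) + 1)) y := by
    intro n y _
    have h := (hasDerivAt_pow (n + 1) y).div_const (((n : ℝ) + 1) ^ 2)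
    refine h.congr_deriv ?_
    have hn : ((n : ℝ) + 1) ≠ 0 := by positivity
    push_cast
    field_simp
  have hg' : ∀ (n : ℕ) (y : ℝ), y ∈ Ioo (-(7/10) : ℝ) (7/10) →
      ‖y ^ n / ((n : ℝ) + 1)‖ ≤ (7/10 : ℝ) ^ n := by
    intro n y hy
    have h1 : |y| ≤ 7/10 := by
      rw [abs_le]; exact ⟨hy.1.le, hy.2.le⟩
    have hn : (1 : ℝ) ≤ (n : ℝ) + 1 := by linarith [Nat.cast_nonneg (α := ℝ) n]
    rw [Real.norm_eq_abs, abs_div, abs_pow]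
    calc |y| ^ n / |(n : ℝ) + 1| ≤ |y| ^ n / 1 := by
          apply div_le_div_of_nonneg_left ?_ ?_ ?_ <;> [positivity; norm_num; · rw [abs_of_nonneg (by positivity)]; exact hn]
      _ = |y| ^ n := by ring
      _ ≤ (7/10 : ℝ) ^ n := pow_le_pow_left₀ (abs_nonneg _) h1 n
  have hg0 : Summable (fun n : ℕ => (0 : ℝ) ^ (n + 1) / ((n : ℝ) + 1) ^ 2) := by
    apply summable_of_ne_finset_zero (s := ∅)
    intro n _
    simp
  exact hasDerivAt_tsum_of_isPreconnected hu isOpen_Ioo (convex_Ioo _ _).isPreconnected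
    hg hg' (by norm_num : (0:ℝ) ∈ Ioo (-(7/10):ℝ) (7/10)) hg0 hx

lemma Dfun_eq {x : ℝ} (hx0 : x ≠ 0) (hx : |x| < 1) :
    Dfun x = -Real.log (1 - x) / x := by
  have h := Real.hasSum_pow_div_log_of_abs_lt_one hx
  have h2 : HasSum (fun n : ℕ => x * (x ^ n / ((n : ℝ) + 1))) (-Real.log (1 - x)) := by
    convert h using 2 with n
    rw [pow_succ']
    ring
  have h3 := h2.mul_left x⁻¹
  have h4 : HasSum (fun n : ℕ => x ^ n / ((n : ℝ) + 1)) (x⁻¹ * -Real.log (1 - x)) := by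
    have e : (fun n : ℕ => x ^ n / ((n : ℝ) + 1)) = fun i : ℕ => x⁻¹ * (x * (x ^ i / ((i : ℝ) + 1))) := by
      funext n
      field_simp
    rw [e]
    exact h3
  rw [Dfun, h4.tsum_eq]
  field_simp

noncomputable def G (y : ℝ) : ℝ :=
  2 * LiR 2 (-(1-y)^2/(4*y)) - 4 * LiR 2 ((1-y)/2) - 4 * LiR 2 (-(1-y)/(2*y))
    - (Real.log y)^2

lemma mem_a {y : ℝ} (hy : y ∈ Icc (1/2 : ℝ) 1) :
    -(1-y)^2/(4*y) ∈ Ioo (-(7/10) : ℝ) (7/10) := by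
  obtain ⟨h1, h2⟩ := hy
  constructor
  · rw [neg_div, neg_lt_neg_iff, div_lt_iff₀ (by linarith)]
    nlinarith
  · have h := div_nonneg (sq_nonneg (1-y)) (by linarith : (0:ℝ) ≤ 4*y)
    rw [neg_div]
    linarith
lemma mem_b {y : ℝ} (hy : y ∈ Icc (1/2 : ℝ) 1) :
    (1-y)/2 ∈ Ioo (-(7/10) : ℝ) (7/10) := by
  obtain ⟨h1, h2⟩ := hy
  constructor <;> [linarith; linarith]
lemma mem_c {y : ℝ} (hy : y ∈ Icc (1/2 : ℝ) 1) :
    -(1-y)/(2*y) ∈ Ioo (-(7/10) : ℝ) (7/10) := by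
  obtain ⟨h1, h2⟩ := hy
  constructor
  · rw [neg_div, neg_lt_neg_iff, div_lt_iff₀ (by linarith)]
    nlinarith
  · have h := div_nonneg (by linarith : (0:ℝ) ≤ 1-y) (by linarith : (0:ℝ) ≤ 2*y)
    rw [neg_div]
    linarith

lemma G_hasDerivAt {y : ℝ} (hy : y ∈ Icc (1/2 : ℝ) 1) :
    HasDerivAt G
      (2 * (Dfun (-(1-y)^2/(4*y)) * ((1-y^2)/(4*y^2)))
        - 4 * (Dfun ((1-y)/2) * (-(1/2)))
        - 4 * (Dfun (-(1-y)/(2*y)) * (1/(2*y^2)))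
        - 2 * Real.log y ^ 1 * y⁻¹) y := by
  have hy0 : (0:ℝ) < y := lt_of_lt_of_le (by norm_num) hy.1
  have ha : HasDerivAt (fun t : ℝ => -(1-t)^2/(4*t)) ((1-y^2)/(4*y^2)) y := by
    have h1 : HasDerivAt (fun t : ℝ => -(1-t)^2) (2*(1-y)) y := by
      have := (((hasDerivAt_id y).const_sub 1).pow 2).neg
      refine this.congr_deriv ?_
      simp [id]
    have h2 : HasDerivAt (fun t : ℝ => 4*t) 4 y := by
      simpa using (hasDerivAt_id y).const_mul 4
    have := h1.div h2 (by positivity)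
    refine this.congr_deriv ?_
    field_simp
    ring
  have hb : HasDerivAt (fun t : ℝ => (1-t)/2) (-(1/2)) y := by
    have := ((hasDerivAt_id y).const_sub 1).div_const 2
    refine this.congr_deriv ?_
    norm_num
  have hc : HasDerivAt (fun t : ℝ => -(1-t)/(2*t)) (1/(2*y^2)) y := by
    have h1 : HasDerivAt (fun t : ℝ => -(1-t)) 1 y := by
      have := ((hasDerivAt_id y).const_sub 1).neg
      refine this.congr_deriv ?_
      norm_num
    have h2 : HasDerivAt (fun t : ℝ => 2*t) 2 y := by
      simpa using (hasDerivAt_id y).const_mul 2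
    have := h1.div h2 (by positivity)
    refine this.congr_deriv ?_
    field_simp
    ring
  have hLa := (hasDerivAt_LiR (mem_a hy)).comp y ha
  have hLb := (hasDerivAt_LiR (mem_b hy)).comp y hb
  have hLc := (hasDerivAt_LiR (mem_c hy)).comp y hc
  have hlog := (Real.hasDerivAt_log hy0.ne').pow 2
  exact (((hLa.const_mul 2).sub (hLb.const_mul 4)).sub (hLc.const_mul 4)).sub hlog

lemma G_deriv_zero {y : ℝ} (hy : y ∈ Ico (1/2 : ℝ) 1) :
    (2 * (Dfun (-(1-y)^2/(4*y)) * ((1-y^2)/(4*y^2)))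
        - 4 * (Dfun ((1-y)/2) * (-(1/2)))
        - 4 * (Dfun (-(1-y)/(2*y)) * (1/(2*y^2)))
        - 2 * Real.log y ^ 1 * y⁻¹) = 0 := by
  obtain ⟨h1, h2⟩ := hy
  have hy0 : (0:ℝ) < y := by linarith
  have h1y : (0:ℝ) < 1 - y := by linarith
  have hpy : (0:ℝ) < 1 + y := by linarith
  -- the three arguments are nonzero and small
  have haz : -(1-y)^2/(4*y) ≠ 0 := by
    apply div_ne_zero ?_ (by positivity)
    intro h
    nlinarith [sq_nonneg (1-y)]
  have hbz : (1-y)/2 ≠ 0 := by positivity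
  have hcz : -(1-y)/(2*y) ≠ 0 := by
    apply div_ne_zero ?_ (by positivity)
    intro h
    nlinarith
  have hyIcc : y ∈ Icc (1/2 : ℝ) 1 := ⟨h1, h2.le⟩
  have haa : |(-(1-y)^2/(4*y))| < 1 := by
    have := mem_a hyIcc
    rw [abs_lt]
    constructor <;> [linarith [this.1]; linarith [this.2]]
  have hba : |((1-y)/2)| < 1 := by
    have := mem_b hyIcc
    rw [abs_lt]
    constructor <;> [linarith [this.1]; linarith [this.2]]
  have hca : |(-(1-y)/(2*y))| < 1 := by
    have := mem_c hyIcc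
    rw [abs_lt]
    constructor <;> [linarith [this.1]; linarith [this.2]]
  rw [Dfun_eq haz haa, Dfun_eq hbz hba, Dfun_eq hcz hca]
  -- rewrite the 1 - argument expressions
  have ea : (1 : ℝ) - (-(1-y)^2/(4*y)) = (1+y)^2/(4*y) := by
    field_simp
    ring
  have eb : (1 : ℝ) - (1-y)/2 = (1+y)/2 := by ring
  have ec : (1 : ℝ) - (-(1-y)/(2*y)) = (1+y)/(2*y) := by
    field_simp
    ring
  rw [ea, eb, ec]
  have la : Real.log ((1+y)^2/(4*y)) = 2 * Real.log (1+y) - (2 * Real.log 2 + Real.log y) := by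
    rw [Real.log_div (by positivity) (by positivity), Real.log_pow,
      Real.log_mul (by norm_num) hy0.ne', show (4:ℝ) = 2^2 by norm_num, Real.log_pow]
    push_cast
    ring
  have lb : Real.log ((1+y)/2) = Real.log (1+y) - Real.log 2 := by
    rw [Real.log_div (by positivity) (by norm_num)]
  have lc : Real.log ((1+y)/(2*y)) = Real.log (1+y) - (Real.log 2 + Real.log y) := by
    rw [Real.log_div (by positivity) (by positivity), Real.log_mul (by norm_num) hy0.ne']
  rw [la, lb, lc]
  have h1y' : (1:ℝ) - y ≠ 0 := h1y.ne'
  have hpy' : (1:ℝ) + y ≠ 0 := hpy.ne'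
  have hym : y - 1 ≠ 0 := sub_ne_zero.mpr (by linarith)
  have hD : -(y^2*2) + y^3*2 ≠ 0 := by
    have e : -(y^2*2) + y^3*2 = 2*y^2*(y-1) := by ring
    rw [e]
    exact mul_ne_zero (by positivity) hym
  field_simp [hD]
  ring

lemma LiR_zero : LiR 2 0 = 0 := by
  simp [LiR]

theorem stmt2 : (Real.log 2) ^ 2 = 2 * LiR 2 (-1/8) - 4 * LiR 2 (1/4) - 4 * LiR 2 (-1/2) := by
  have key := constant_of_has_deriv_right_zero
    (f := G) (a := (1/2 : ℝ)) (b := 1)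
    (fun x hx => (G_hasDerivAt hx).continuousAt.continuousWithinAt)
    (fun x hx => by
      have h := G_hasDerivAt (Ico_subset_Icc_self hx)
      rw [G_deriv_zero hx] at h
      exact h.hasDerivWithinAt)
  have h1 : G 1 = G (1/2) := key 1 ⟨by norm_num, le_refl 1⟩
  have hG1 : G 1 = 0 := by
    have e1 : -((1:ℝ)-1)^2/(4*1) = 0 := by norm_num
    have e2 : ((1:ℝ)-1)/2 = 0 := by norm_num
    have e3 : -((1:ℝ)-1)/(2*1) = 0 := by norm_num
    rw [G, e1, e2, e3, LiR_zero, Real.log_one]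
    ring
  have hGhalf : G (1/2) = 0 := by rw [← h1, hG1]
  rw [G] at hGhalf
  have e1 : -((1:ℝ)-1/2)^2/(4*(1/2)) = -1/8 := by norm_num
  have e2 : ((1:ℝ)-1/2)/2 = 1/4 := by norm_num
  have e3 : -((1:ℝ)-1/2)/(2*(1/2)) = -1/2 := by norm_num
  rw [e1, e2, e3] at hGhalf
  have hl : Real.log (1/2) = -Real.log 2 := by
    rw [one_div, Real.log_inv]
  rw [hl] at hGhalf
  nlinarith [hGhalf]
end

section
/- π·log 2/8 = 2·Im Li₂((1/2)e^{iπ/2}) − 2·Im Li₂((1/(2√2))e^{iπ/4}) − Im Li₂((1/(4√2))e^{iπ/4}), where Im Li₂(p·e^{ix}) = ∑_{k≥1} p^k sin(kx)/k². -/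
open Complex


-- basic summability
lemma li_summable {z : ℂ} (hz : ‖z‖ ≤ 1) :
    Summable (fun k : ℕ => z ^ (k + 1) / ((k : ℂ) + 1) ^ 2) := by
  have h1 : Summable (fun k : ℕ => 1 / ((k : ℝ) + 1) ^ 2) := by
    have := Real.summable_one_div_nat_pow.mpr (by norm_num : 1 < 2)
    have := (summable_nat_add_iff 1).mpr this
    simpa [add_comm] using this
  refine Summable.of_norm ?_
  refine h1.of_nonneg_of_le (fun k => norm_nonneg _) (fun k => ?_)
  rw [norm_div, norm_pow, norm_pow]
  have hk : ‖(k : ℂ) + 1‖ = (k : ℝ) + 1 := by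
    have : ((k : ℂ) + 1) = ((k + 1 : ℕ) : ℂ) := by push_cast; ring
    rw [this, Complex.norm_natCast]; push_cast; ring
  have hz1 : ‖z‖ ^ (k+1) ≤ 1 := pow_le_one₀ (norm_nonneg z) hz
  rw [hk]
  exact div_le_div₀ (by norm_num) hz1 (by positivity) le_rfl

lemma li_zero : Li 2 0 = 0 := by
  unfold Li
  have : (fun k : ℕ => (0:ℂ) ^ (k + 1) / ((k : ℂ) + 1) ^ 2) = fun _ => 0 := by
    funext k; simp [zero_pow (Nat.succ_ne_zero k)]
  rw [this, tsum_zero]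

lemma li_conj (z : ℂ) : Li 2 ((starRingEnd ℂ) z) = (starRingEnd ℂ) (Li 2 z) := by
  unfold Li
  rw [show ((starRingEnd ℂ) (∑' k : ℕ, z ^ (k + 1) / ((k : ℂ) + 1) ^ 2)
      = ∑' k : ℕ, (starRingEnd ℂ) (z ^ (k + 1) / ((k : ℂ) + 1) ^ 2)) from tsum_star]
  congr 1; funext k
  rw [map_div₀, map_pow, map_pow, map_add, map_natCast, map_one]

lemma li_dup {z : ℂ} (hz : ‖z‖ ≤ 1) : Li 2 z + Li 2 (-z) = Li 2 (z^2) / 2 := by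
  have hz' : ‖-z‖ ≤ 1 := by rwa [norm_neg]
  unfold Li
  rw [← Summable.tsum_add (li_summable hz) (li_summable hz')]
  set h : ℕ → ℂ := fun k => z ^ (k + 1) / ((k : ℂ) + 1) ^ 2 + (-z) ^ (k + 1) / ((k : ℂ) + 1) ^ 2 with hh
  have hinj : Function.Injective (fun m : ℕ => 2 * m + 1) := by
    intro a b hab; simp only at hab; omega
  have hsupp : Function.support h ⊆ Set.range (fun m : ℕ => 2 * m + 1) := by
    intro k hk
    rcases Nat.even_or_odd k with he | ho
    · exfalso
      apply hk
      obtain ⟨m, rfl⟩ := he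
      have : (-z) ^ (m + m + 1) = -(z ^ (m + m + 1)) := by
        rw [neg_pow]
        have : (-1 : ℂ) ^ (m + m + 1) = -1 := Odd.neg_one_pow ⟨m, by ring⟩
        rw [this]; ring
      simp only [hh, this]; ring
    · obtain ⟨m, rfl⟩ := ho
      exact ⟨m, rfl⟩
  rw [← Function.Injective.tsum_eq hinj hsupp]
  have : ∀ m : ℕ, h (2 * m + 1) = (z ^ 2) ^ (m + 1) / ((m : ℂ) + 1) ^ 2 / 2 := by
    intro m
    have hcast : ((2 * m + 1 : ℕ) : ℂ) + 1 = 2 * ((m : ℂ) + 1) := by push_cast; ring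
    have hpow : (-z) ^ (2 * m + 1 + 1) = z ^ (2 * m + 1 + 1) := by
      rw [neg_pow]
      have : (-1 : ℂ) ^ (2 * m + 1 + 1) = 1 := Even.neg_one_pow ⟨m + 1, by ring⟩
      rw [this, one_mul]
    have hzz : z ^ (2 * m + 1 + 1) = (z ^ 2) ^ (m + 1) := by
      rw [← pow_mul]; ring_nf
    simp only [hh, hpow, hzz, hcast]
    have h2 : ((m : ℂ) + 1) ≠ 0 := Nat.cast_add_one_ne_zero m
    field_simp
    ring
  rw [tsum_congr this, tsum_div_const]

noncomputable def L1 (z : ℂ) : ℂ := ∑' k : ℕ, z ^ k / ((k : ℂ) + 1)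

lemma L1_zero : L1 0 = 1 := by
  unfold L1
  rw [tsum_eq_single 0 (fun k hk => by
    rw [zero_pow hk, zero_div])]
  norm_num

lemma L1_hasSum {z : ℂ} (hz : ‖z‖ < 1) : HasSum (fun k : ℕ => z ^ (k+1) / ((k : ℂ) + 1)) (-Complex.log (1 - z)) := by
  have h := Complex.hasSum_taylorSeries_neg_log hz
  have h2 : HasSum (fun n : ℕ => z ^ (n+1) / ((n+1 : ℕ) : ℂ))
      (-Complex.log (1-z) - ∑ i ∈ Finset.range 1, z ^ i / (i:ℂ)) :=
    (hasSum_nat_add_iff' (f := fun n : ℕ => z ^ n / (n : ℂ)) 1).mpr h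
  have h3 : (-Complex.log (1-z) - ∑ i ∈ Finset.range 1, z ^ i / (i:ℂ)) = -Complex.log (1-z) := by
    simp
  rw [h3] at h2
  convert h2 using 2 with k
  push_cast
  ring
lemma L1_eq {z : ℂ} (hz : ‖z‖ < 1) (h0 : z ≠ 0) : L1 z = -Complex.log (1 - z) / z := by
  have h := L1_hasSum hz
  have h2 : HasSum (fun k : ℕ => z * (z ^ k / ((k : ℂ) + 1))) (-Complex.log (1 - z)) := by
    convert h using 2 with k
    field_simp
    ring
  have h3 := h2.mul_left z⁻¹
  have : ∀ k : ℕ, z⁻¹ * (z * (z ^ k / ((k : ℂ) + 1))) = z ^ k / ((k : ℂ) + 1) := by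
    intro k; field_simp
  rw [funext this] at h3
  rw [L1, h3.tsum_eq]
  field_simp

lemma li_hasDerivAt {z : ℂ} (hz : ‖z‖ < 1) : HasDerivAt (Li 2) (L1 z) z := by
  set r : ℝ := (‖z‖ + 1) / 2 with hr
  have hr0 : 0 < r := by positivity
  have hr1 : r < 1 := by rw [hr]; linarith
  have hzr : ‖z‖ < r := by rw [hr]; linarith
  have key := hasDerivAt_tsum_of_isPreconnected
    (g := fun (k : ℕ) (y : ℂ) => y ^ (k + 1) / ((k : ℂ) + 1) ^ 2)
    (g' := fun (k : ℕ) (y : ℂ) => y ^ k / ((k : ℂ) + 1))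
    (u := fun k : ℕ => r ^ k)
    (summable_geometric_of_lt_one hr0.le hr1)
    (Metric.isOpen_ball (x := (0:ℂ)) (ε := r))
    ((convex_ball (0:ℂ) r).isPreconnected)
    ?_ ?_ (Metric.mem_ball_self hr0) ?_ (by simpa [Metric.mem_ball, dist_eq_norm] using hzr)
  · exact key
  · intro k y _
    have hk : ((k : ℂ) + 1) ≠ 0 := Nat.cast_add_one_ne_zero k
    have h1 : HasDerivAt (fun y : ℂ => y ^ (k+1)) (((k:ℂ)+1) * y ^ k) y := by
      have := hasDerivAt_pow (k+1) y
      refine this.congr_deriv ?_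
      push_cast; ring
    have h2 := h1.div_const (((k : ℂ) + 1) ^ 2)
    refine h2.congr_deriv ?_
    field_simp
  · intro k y hy
    have hy' : ‖y‖ < r := by simpa [Metric.mem_ball, dist_eq_norm] using hy
    rw [norm_div]
    have hk : (1:ℝ) ≤ ‖(k : ℂ) + 1‖ := by
      have : ((k : ℂ) + 1) = ((k + 1 : ℕ) : ℂ) := by push_cast; ring
      rw [this, Complex.norm_natCast]
      exact_mod_cast Nat.one_le_iff_ne_zero.mpr (Nat.succ_ne_zero k)
    calc ‖y ^ k‖ / ‖(k:ℂ) + 1‖ ≤ ‖y ^ k‖ := div_le_self (norm_nonneg _) hk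
      _ = ‖y‖ ^ k := norm_pow y k
      _ ≤ r ^ k := pow_le_pow_left₀ (norm_nonneg y) hy'.le k
  · refine Summable.of_norm ?_
    have : ∀ k : ℕ, ‖(0:ℂ) ^ (k + 1) / ((k : ℂ) + 1) ^ 2‖ = 0 := by
      intro k; rw [zero_pow (Nat.succ_ne_zero k), zero_div, norm_zero]
    rw [funext this]
    exact summable_zero

lemma landen {w : ℂ} (hw1 : ‖w‖ < 1) (hw2 : w.re < 1/2) :
    Li 2 (w/(w-1)) + Li 2 w + (Complex.log (1-w))^2/2 = 0 := by
  set S : Set ℂ := {z : ℂ | ‖z‖ < 1 ∧ z.re < 1/2} with hS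
  set h : ℂ → ℂ := fun z => Li 2 (z/(z-1)) + Li 2 z + (Complex.log (1-z))^2/2 with hh
  have facts : ∀ x ∈ S, x - 1 ≠ 0 ∧ 0 < (1 - x).re ∧ ‖x/(x-1)‖ < 1 ∧ (1 - x) ∈ Complex.slitPlane := by
    intro x hx
    obtain ⟨hx1, hx2⟩ := hx
    have hre : 0 < (1 - x).re := by
      simp only [Complex.sub_re, Complex.one_re]; linarith
    have hne : x - 1 ≠ 0 := by
      intro hc
      have : x = 1 := by linear_combination hc
      rw [this] at hx2; norm_num at hx2
    have hpsi : ‖x/(x-1)‖ < 1 := by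
      rw [norm_div, div_lt_one (norm_pos_iff.mpr hne)]
      have h1 : ‖x‖^2 < ‖x-1‖^2 := by
        have en : ∀ z : ℂ, ‖z‖^2 = Complex.normSq z := by
          intro z; rw [Complex.normSq_eq_norm_sq]
        rw [en, en, Complex.normSq_sub]
        simp only [Complex.normSq_one, map_one, Complex.mul_re, Complex.conj_re, Complex.one_re,
          Complex.conj_im, Complex.one_im]
        nlinarith
      nlinarith [norm_nonneg x, norm_nonneg (x-1)]
    exact ⟨hne, hre, hpsi, Complex.mem_slitPlane_iff.mpr (Or.inl hre)⟩
  -- h has derivative 0 on S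
  have hderiv : ∀ x ∈ S, HasDerivAt h 0 x := by
    intro x hx
    obtain ⟨hne, hre, hpsi, hslit⟩ := facts x hx
    obtain ⟨hx1, hx2⟩ := hx
    -- derivative of inner map z ↦ z/(z-1)
    have d1 : HasDerivAt (fun z : ℂ => z/(z-1)) (-1/(x-1)^2) x := by
      have := (hasDerivAt_id x).div ((hasDerivAt_id x).sub_const 1) hne
      refine this.congr_deriv ?_
      simp only [id]; ring
    have d2 : HasDerivAt (fun z : ℂ => Li 2 (z/(z-1))) (L1 (x/(x-1)) * (-1/(x-1)^2)) x :=
      by exact (li_hasDerivAt hpsi).comp x d1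
    have d3 : HasDerivAt (Li 2) (L1 x) x := li_hasDerivAt hx1
    have d4 : HasDerivAt (fun z : ℂ => (Complex.log (1-z))^2/2)
        (Complex.log (1-x) * (-(1-x)⁻¹)) x := by
      have hinner : HasDerivAt (fun z : ℂ => 1 - z) (-1) x := by
        simpa using (hasDerivAt_id x).const_sub 1
      have hlog : HasDerivAt (fun z : ℂ => Complex.log (1-z)) ((1-x)⁻¹ * (-1)) x :=
        (Complex.hasDerivAt_log hslit).comp x hinner
      have := (hlog.pow 2).div_const 2
      refine this.congr_deriv ?_
      ring
    have dtot := (d2.add d3).add d4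
    have hzero : L1 (x/(x-1)) * (-1/(x-1)^2) + L1 x + Complex.log (1-x) * (-(1-x)⁻¹) = 0 := by
      have h1x : (1:ℂ) - x ≠ 0 := by
        intro hc; rw [hc] at hre; norm_num at hre
      have hlogpsi : Complex.log (1 - x/(x-1)) = - Complex.log (1-x) := by
        have e1 : 1 - x/(x-1) = (1-x)⁻¹ := by
          field_simp
          ring
        rw [e1]
        exact Complex.log_inv _ (Complex.slitPlane_arg_ne_pi hslit)
      rcases eq_or_ne x 0 with rfl | hx0
      · simp [L1_zero]
      · have hpsine : x/(x-1) ≠ 0 := div_ne_zero hx0 hne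
        rw [L1_eq hpsi hpsine, L1_eq hx1 hx0, hlogpsi]
        field_simp
        ring
    rw [← hzero]
    exact dtot
  -- conclude h is constant on S via MVT with zero bound
  have hconv : Convex ℝ S := by
    have : S = Metric.ball (0:ℂ) 1 ∩ {z : ℂ | z.re < 1/2} := by
      ext z
      simp [hS, Metric.mem_ball, dist_eq_norm]
    rw [this]
    exact (convex_ball 0 1).inter (convex_halfSpace_re_lt _)
  have h0S : (0:ℂ) ∈ S := by constructor <;> simp [hS]
  have hwS : w ∈ S := ⟨hw1, hw2⟩
  have key : ‖h w - h 0‖ ≤ 0 * ‖w - 0‖ := by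
    refine hconv.norm_image_sub_le_of_norm_hasFDerivWithin_le
      (f' := fun _ => (0 : ℂ →L[ℝ] ℂ)) (fun x hx => ?_) (fun x _ => by simp) h0S hwS
    have := (hderiv x hx).hasFDerivAt.restrictScalars ℝ
    have e0 : ((ContinuousLinearMap.toSpanSingleton ℂ (0:ℂ)).restrictScalars ℝ)
        = (0 : ℂ →L[ℝ] ℂ) := by
      ext1 v
      simp
    rw [e0] at this
    exact this.hasFDerivWithinAt
  have hzero : h w = h 0 := by
    have := key
    simp only [zero_mul] at this
    have := norm_le_zero_iff.mp this
    linear_combination this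
  have hh0 : h 0 = 0 := by
    simp only [hh]
    norm_num [li_zero]
  calc Li 2 (w/(w-1)) + Li 2 w + (Complex.log (1-w))^2/2 = h w := rfl
    _ = 0 := by rw [hzero, hh0]

-- Im of (log c)^2 for c with positive real part
lemma logsq_im {c : ℂ} (hc : 0 < c.re) :
    ((Complex.log c)^2).im = Real.log (Complex.normSq c) * Real.arctan (c.im / c.re) := by
  have habs : |Complex.arg c| < Real.pi / 2 := by
    rw [Complex.abs_arg_lt_pi_div_two_iff]; exact Or.inl hc
  have harg : Complex.arg c = Real.arctan (c.im / c.re) := by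
    rw [← Complex.tan_arg]
    rw [Real.arctan_tan (by cases abs_lt.mp habs; linarith) (by cases abs_lt.mp habs; linarith)]
  have him : ((Complex.log c)^2).im = 2 * (Complex.log c).re * (Complex.log c).im := by
    rw [pow_two, Complex.mul_im]; ring
  rw [him, Complex.log_re, Complex.log_im, harg]
  have : Real.log ‖c‖ = Real.log (Complex.normSq c) / 2 := by
    rw [Complex.norm_def, Real.log_sqrt (Complex.normSq_nonneg c)]
  rw [this]; ring

lemma norm_lt_one' {z : ℂ} (h : Complex.normSq z < 1) : ‖z‖ < 1 := by
  have h2 : ‖z‖^2 = Complex.normSq z := by rw [Complex.normSq_eq_norm_sq]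
  nlinarith [norm_nonneg z]

theorem stmt5 : Real.pi * Real.log 2 / 8 = 2 * (Li 2 (((1/2 : ℝ) : ℂ) * Complex.exp ((Real.pi / 2) * Complex.I))).im - 2 * (Li 2 (((1 / (2 * Real.sqrt 2) : ℝ) : ℂ) * Complex.exp ((Real.pi / 4) * Complex.I))).im - (Li 2 (((1 / (4 * Real.sqrt 2) : ℝ) : ℂ) * Complex.exp ((Real.pi / 4) * Complex.I))).im := by
  have sqrt2_pos : (0:ℝ) < Real.sqrt 2 := Real.sqrt_pos.mpr (by norm_num)
  have sqrt2_sq : Real.sqrt 2 * Real.sqrt 2 = 2 := Real.mul_self_sqrt (by norm_num)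
  -- identify the three arguments
  have e2 : Complex.exp ((Real.pi / 2) * Complex.I) = Complex.I := by
    rw [Complex.exp_mul_I]
    have hc : Complex.cos ((Real.pi:ℂ) / 2) = 0 := by
      rw [show ((Real.pi:ℂ)/2) = ((Real.pi/2 : ℝ) : ℂ) by push_cast; ring,
        ← Complex.ofReal_cos, Real.cos_pi_div_two]; simp
    have hs : Complex.sin ((Real.pi:ℂ) / 2) = 1 := by
      rw [show ((Real.pi:ℂ)/2) = ((Real.pi/2 : ℝ) : ℂ) by push_cast; ring,
        ← Complex.ofReal_sin, Real.sin_pi_div_two]; simp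
    rw [hc, hs]; ring
  have e4 : Complex.exp ((Real.pi / 4) * Complex.I)
      = ((Real.sqrt 2 / 2 : ℝ) : ℂ) * (1 + Complex.I) := by
    rw [Complex.exp_mul_I]
    have hc : Complex.cos ((Real.pi:ℂ) / 4) = ((Real.sqrt 2 / 2 : ℝ) : ℂ) := by
      rw [show ((Real.pi:ℂ)/4) = ((Real.pi/4 : ℝ) : ℂ) by push_cast; ring,
        ← Complex.ofReal_cos, Real.cos_pi_div_four]
    have hs : Complex.sin ((Real.pi:ℂ) / 4) = ((Real.sqrt 2 / 2 : ℝ) : ℂ) := by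
      rw [show ((Real.pi:ℂ)/4) = ((Real.pi/4 : ℝ) : ℂ) by push_cast; ring,
        ← Complex.ofReal_sin, Real.sin_pi_div_four]
    rw [hc, hs]; ring
  have arg1 : ((1/2 : ℝ) : ℂ) * Complex.exp ((Real.pi / 2) * Complex.I) = Complex.I / 2 := by
    rw [e2]; push_cast; ring
  have arg2 : ((1 / (2 * Real.sqrt 2) : ℝ) : ℂ) * Complex.exp ((Real.pi / 4) * Complex.I)
      = (1 + Complex.I) / 4 := by
    rw [e4, ← mul_assoc, ← Complex.ofReal_mul]
    have : (1 / (2 * Real.sqrt 2)) * (Real.sqrt 2 / 2) = (1/4 : ℝ) := by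
      field_simp
      nlinarith [sqrt2_sq]
    rw [this]; push_cast; ring
  have arg3 : ((1 / (4 * Real.sqrt 2) : ℝ) : ℂ) * Complex.exp ((Real.pi / 4) * Complex.I)
      = (1 + Complex.I) / 8 := by
    rw [e4, ← mul_assoc, ← Complex.ofReal_mul]
    have : (1 / (4 * Real.sqrt 2)) * (Real.sqrt 2 / 2) = (1/8 : ℝ) := by
      field_simp
      nlinarith [sqrt2_sq]
    rw [this]; push_cast; ring
  rw [arg1, arg2, arg3]
  -- the ladder
  set w : ℂ := (-1 - 2*Complex.I)/5 with hw
  set v : ℂ := (-3 - 4*Complex.I)/25 with hv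
  have hwnorm : ‖w‖ < 1 := by
    apply norm_lt_one'
    rw [hw]; norm_num [Complex.normSq_apply, Complex.div_re, Complex.div_im]
  have hwre : w.re < 1/2 := by
    rw [hw]; norm_num [Complex.div_re]
  have hvnorm : ‖v‖ < 1 := by
    apply norm_lt_one'
    rw [hv]; norm_num [Complex.normSq_apply, Complex.div_re, Complex.div_im]
  have hvre : v.re < 1/2 := by
    rw [hv]; norm_num [Complex.div_re]
  have hunorm : ‖(-Complex.I/2 : ℂ)‖ < 1 := by
    apply norm_lt_one'
    norm_num [Complex.normSq_apply, Complex.div_re, Complex.div_im]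
  have hure : (-Complex.I/2 : ℂ).re < 1/2 := by
    norm_num [Complex.div_re]
  -- nonzero denominators
  have hwne : w - 1 ≠ 0 := by
    rw [hw]; intro h
    have := congrArg Complex.im h
    simp [Complex.div_im] at this
  have hvne : v - 1 ≠ 0 := by
    rw [hv]; intro h
    have := congrArg Complex.im h
    simp [Complex.div_im] at this
  have hune : (-Complex.I/2 : ℂ) - 1 ≠ 0 := by
    intro h
    have := congrArg Complex.im h
    simp [Complex.div_im] at this
  -- Landen instances
  have E1 := landen hwnorm hwre
  have E2 := landen hvnorm hvre
  have E3 := landen hunorm hure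
  have q1 : w/(w-1) = (1 + Complex.I)/4 := by
    rw [div_eq_div_iff hwne (by norm_num : (4:ℂ) ≠ 0), hw]
    linear_combination (2/5 : ℂ) * Complex.I_sq
  have q2 : v/(v-1) = (1 + Complex.I)/8 := by
    rw [div_eq_div_iff hvne (by norm_num : (8:ℂ) ≠ 0), hv]
    linear_combination (4/25 : ℂ) * Complex.I_sq
  have q3 : (-Complex.I/2)/((-Complex.I/2)-1) = -w := by
    rw [div_eq_iff hune, hw]
    linear_combination (1/5 : ℂ) * Complex.I_sq
  rw [q1] at E1
  rw [q2] at E2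
  rw [q3] at E3
  -- duplication and conjugation
  have E4 : Li 2 w + Li 2 (-w) = Li 2 (w^2) / 2 := li_dup hwnorm.le
  have hcv : (starRingEnd ℂ) (w^2) = v := by
    rw [map_pow, hw, hv]
    rw [map_div₀, map_sub, map_neg, map_one, map_mul, Complex.conj_I, map_ofNat, map_ofNat]
    linear_combination (4/25 : ℂ) * Complex.I_sq
  have E5 : Li 2 v = (starRingEnd ℂ) (Li 2 (w^2)) := by
    rw [← hcv, li_conj]
  have hcu : (starRingEnd ℂ) (Complex.I/2) = -Complex.I/2 := by
    rw [map_div₀, Complex.conj_I, map_ofNat]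
  have E6 : Li 2 (-Complex.I/2) = (starRingEnd ℂ) (Li 2 (Complex.I/2)) := by
    rw [← hcu, li_conj]
  -- elementary log computations
  have h1w : (1:ℂ) - w = (6 + 2*Complex.I)/5 := by rw [hw]; ring
  have h1v : (1:ℂ) - v = (28 + 4*Complex.I)/25 := by rw [hv]; ring
  have h1u : (1:ℂ) - (-Complex.I/2) = (2 + Complex.I)/2 := by ring
  have hE1 : ((Complex.log (1 - w))^2).im = Real.log (8/5) * Real.arctan (1/3) := by
    rw [h1w, logsq_im (by norm_num [Complex.div_re])]
    norm_num [Complex.normSq_apply, Complex.div_re, Complex.div_im]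
  have hE2 : ((Complex.log (1 - v))^2).im = Real.log (32/25) * Real.arctan (1/7) := by
    rw [h1v, logsq_im (by norm_num [Complex.div_re])]
    norm_num [Complex.normSq_apply, Complex.div_re, Complex.div_im]
  have hE3 : ((Complex.log (1 - (-Complex.I/2)))^2).im = Real.log (5/4) * Real.arctan (1/2) := by
    rw [h1u, logsq_im (by norm_num [Complex.div_re])]
    norm_num [Complex.normSq_apply, Complex.div_re, Complex.div_im]
  -- take imaginary parts
  have iE1 : Real.log (8/5) * Real.arctan (1/3)
      = -2 * (Li 2 ((1 + Complex.I)/4)).im - 2 * (Li 2 w).im := by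
    have e : (Complex.log (1-w))^2 = -2 * Li 2 ((1 + Complex.I)/4) - 2 * Li 2 w := by
      linear_combination 2 * E1
    have he := congrArg Complex.im e
    rw [hE1] at he
    rw [he]
    simp [Complex.sub_im, Complex.mul_im]
  have iE2 : Real.log (32/25) * Real.arctan (1/7)
      = -2 * (Li 2 ((1 + Complex.I)/8)).im - 2 * (Li 2 v).im := by
    have e : (Complex.log (1-v))^2 = -2 * Li 2 ((1 + Complex.I)/8) - 2 * Li 2 v := by
      linear_combination 2 * E2
    have he := congrArg Complex.im e
    rw [hE2] at he
    rw [he]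
    simp [Complex.sub_im, Complex.mul_im]
  have iE3 : Real.log (5/4) * Real.arctan (1/2)
      = -2 * (Li 2 (-w)).im - 2 * (Li 2 (-Complex.I/2)).im := by
    have e : (Complex.log (1-(-Complex.I/2)))^2 = -2 * Li 2 (-w) - 2 * Li 2 (-Complex.I/2) := by
      linear_combination 2 * E3
    have he := congrArg Complex.im e
    rw [hE3] at he
    rw [he]
    simp [Complex.sub_im, Complex.mul_im]
  have iE4 : 2 * (Li 2 w).im + 2 * (Li 2 (-w)).im = (Li 2 (w^2)).im := by
    have e : 2 * Li 2 w + 2 * Li 2 (-w) = Li 2 (w^2) := by linear_combination 2 * E4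
    have he := congrArg Complex.im e
    simpa [Complex.add_im, Complex.mul_im] using he
  have iE5 : (Li 2 v).im = -(Li 2 (w^2)).im := by
    rw [E5]; exact Complex.conj_im _
  have iE6 : (Li 2 (-Complex.I/2)).im = -(Li 2 (Complex.I/2)).im := by
    rw [E6]; exact Complex.conj_im _
  -- final real arithmetic
  have l85 : Real.log (8/5) = 3 * Real.log 2 - Real.log 5 := by
    rw [Real.log_div (by norm_num) (by norm_num), show (8:ℝ) = 2^3 by norm_num, Real.log_pow]
    push_cast; ring
  have l3225 : Real.log (32/25) = 5 * Real.log 2 - 2 * Real.log 5 := by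
    rw [Real.log_div (by norm_num) (by norm_num), show (32:ℝ) = 2^5 by norm_num,
      show (25:ℝ) = 5^2 by norm_num, Real.log_pow, Real.log_pow]
    push_cast; ring
  have l54 : Real.log (5/4) = Real.log 5 - 2 * Real.log 2 := by
    rw [Real.log_div (by norm_num) (by norm_num), show (4:ℝ) = 2^2 by norm_num, Real.log_pow]
    push_cast; ring
  have hAB : Real.arctan (1/2) + Real.arctan (1/3) = Real.pi / 4 := by
    rw [Real.arctan_add (by norm_num)]
    norm_num [Real.arctan_one]
  have hC : Real.arctan (1/7) + Real.arctan (1/3) = Real.arctan (1/2) := by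
    rw [Real.arctan_add (by norm_num)]
    norm_num
  -- assemble
  have final : Real.pi * Real.log 2 / 8
      = Real.log (8/5) * Real.arctan (1/3) + Real.log (32/25) * Real.arctan (1/7) / 2
        + Real.log (5/4) * Real.arctan (1/2) := by
    rw [l85, l3225, l54, show Real.arctan (1/7) = Real.arctan (1/2) - Real.arctan (1/3) by
      linarith [hC]]
    have : Real.pi = 4 * (Real.arctan (1/2) + Real.arctan (1/3)) := by linarith [hAB]
    rw [this]
    ring
  rw [final]
  linarith [iE1, iE2, iE3, iE4, iE5, iE6]
end
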